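/- For each n ≥ 1 and all real x, the (2n)-th derivative of arctan at x equals (-1)^n · (2n-1)! / (1+x²)^{n+1/2} · x · U_{2n-1}(1/√(1+x²)). -/

import Mathlib

open Finset Polynomial Real

lemma arctan_iter (m : ℕ) (x : ℝ) :
    iteratedDeriv (m + 1) Real.arctan x =
      (m.factorial : ℝ) * (Real.cos (Real.arctan x))^(m+1) *
        Real.sin ((m+1) * (Real.arctan x + π/2)) := by
  induction m generalizing x with
  | zero =>
      have h : deriv Real.arctan x = 1 / (1 + x^2) := (Real.hasDerivAt_arctan x).deriv
      have hc : Real.cos (Real.arctan x) ^ 2 = 1 / (1 + x^2) := by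
        rw [Real.cos_arctan]
        rw [div_pow, one_pow, Real.sq_sqrt (by positivity)]
      simp only [iteratedDeriv_one, h, Nat.factorial_zero, Nat.cast_one, one_mul,
        Nat.cast_zero, zero_add, one_mul, Real.sin_add_pi_div_two]
      rw [← hc]; ring
  | succ m ih =>
      have key : iteratedDeriv (m + 1 + 1) Real.arctan x =
          deriv (iteratedDeriv (m + 1) Real.arctan) x := by
        rw [iteratedDeriv_succ]
      rw [key]
      have hfun : iteratedDeriv (m + 1) Real.arctan = fun y =>
          (m.factorial : ℝ) * (Real.cos (Real.arctan y))^(m+1) *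
            Real.sin ((m+1) * (Real.arctan y + π/2)) := funext ih
      rw [hfun]
      set θ := Real.arctan x with hθ
      have h1 : HasDerivAt Real.arctan (1/(1+x^2)) x := Real.hasDerivAt_arctan x
      have hc2 : Real.cos θ ^ 2 = 1 / (1 + x^2) := by
        rw [hθ, Real.cos_arctan, div_pow, one_pow, Real.sq_sqrt (by positivity)]
      have hg : HasDerivAt (fun y => Real.cos (Real.arctan y))
          (-Real.sin θ * (1/(1+x^2))) x := h1.cos
      have hu : HasDerivAt (fun y => ((m:ℝ)+1) * (Real.arctan y + π/2))
          (((m:ℝ)+1) * (1/(1+x^2))) x := (h1.add_const (π/2)).const_mul _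
      have hs : HasDerivAt (fun y => Real.sin (((m:ℝ)+1) * (Real.arctan y + π/2)))
          (Real.cos (((m:ℝ)+1) * (θ + π/2)) * (((m:ℝ)+1) * (1/(1+x^2)))) x := hu.sin
      have hpow : HasDerivAt (fun y => (Real.cos (Real.arctan y))^(m+1))
          ((m+1 : ℕ) * (Real.cos θ)^m * (-Real.sin θ * (1/(1+x^2)))) x := hg.pow (m+1)
      have htot := ((hpow.const_mul (m.factorial : ℝ)).mul hs)
      have hd := htot.deriv
      simp only [Nat.cast_add, Nat.cast_one] at hd ⊢
      rw [show (fun y => (m.factorial : ℝ) * (Real.cos (Real.arctan y))^(m+1) *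
            Real.sin (((m:ℝ)+1) * (Real.arctan y + π/2))) =
          ((fun y => (m.factorial : ℝ) * (Real.cos (Real.arctan y))^(m+1)) *
            fun y => Real.sin (((m:ℝ)+1) * (Real.arctan y + π/2))) from rfl, hd]
      have hfac : ((m+1).factorial : ℝ) = ((m:ℝ)+1) * m.factorial := by
        rw [Nat.factorial_succ]; push_cast; ring
      have htrig : Real.sin (((m:ℝ)+1+1) * (θ + π/2)) =
          Real.cos θ * Real.cos (((m:ℝ)+1) * (θ + π/2))
            - Real.sin θ * Real.sin (((m:ℝ)+1) * (θ + π/2)) := by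
        have : ((m:ℝ)+1+1) * (θ + π/2) = (((m:ℝ)+1) * (θ + π/2) + θ) + π/2 := by ring
        rw [this, Real.sin_add_pi_div_two, Real.cos_add]
        ring
      simp only [← hθ]
      rw [hfac, htrig, ← hc2]
      ring

theorem arctan_even_deriv_chebyshevU (n : ℕ) (hn : 1 ≤ n) (x : ℝ) :
    iteratedDeriv (2 * n) Real.arctan x =
      (-1 : ℝ)^n * (2 * n - 1).factorial / ((1 + x^2)^n * Real.sqrt (1 + x^2)) * x *
        (Polynomial.Chebyshev.U ℝ (2 * n - 1)).eval (1 / Real.sqrt (1 + x^2)) := by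
  obtain ⟨m, rfl⟩ : ∃ m, n = m + 1 := ⟨n - 1, by omega⟩
  have h2n : 2 * (m + 1) = (2 * m + 1) + 1 := by ring
  rw [show (2 * (m+1) - 1 : ℕ) = 2*m+1 from by omega, h2n, arctan_iter]
  set θ := Real.arctan x with hθ
  have hsq : Real.sqrt (1 + x^2) > 0 := Real.sqrt_pos.2 (by positivity)
  have hc : Real.cos θ = 1 / Real.sqrt (1 + x^2) := Real.cos_arctan x
  have hs : Real.sin θ = x / Real.sqrt (1 + x^2) := Real.sin_arctan x
  have hU : (Polynomial.Chebyshev.U ℝ (2 * (m+1) - 1)).eval (Real.cos θ) * Real.sin θ =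
      Real.sin ((2*(m+1):ℝ) * θ) := by
    have h := Polynomial.Chebyshev.U_real_cos θ (2 * (m+1) - 1)
    rw [h]
    congr 1
    push_cast
    ring
  have hshift : Real.sin (((2*m+1:ℕ)+1 : ℝ) * (θ + π/2)) =
      (-1:ℝ)^(m+1) * Real.sin ((2*(m+1):ℝ) * θ) := by
    have h1 : ((2*m+1:ℕ)+1 : ℝ) * (θ + π/2) = (2*(m+1):ℝ) * θ + ((m+1:ℕ):ℝ) * π := by
      push_cast; ring
    rw [h1, Real.sin_add_nat_mul_pi]
  rw [hshift]
  have hcp : Real.cos θ ^ (2*m+1+1) = 1 / (1+x^2)^(m+1) := by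
    rw [hc, div_pow, one_pow, show 2*m+1+1 = 2*(m+1) by ring, pow_mul,
      Real.sq_sqrt (by positivity)]
  have hUs : Real.sin ((2*(m+1):ℝ) * θ) =
      (Polynomial.Chebyshev.U ℝ (2 * (m+1) - 1)).eval (1 / Real.sqrt (1+x^2)) *
        (x / Real.sqrt (1+x^2)) := by
    rw [← hc, ← hs, hU]
  rw [hcp, hUs]
  have hne : Real.sqrt (1+x^2) ≠ 0 := ne_of_gt hsq
  rw [show (2 * ((m:ℤ)+1) - 1) = ((2*m+1 : ℕ) : ℤ) from by push_cast; ring]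
  field_simp
  have hidx : (2 * ((m+1:ℕ):ℤ) - 1) = ((2*m+1 : ℕ) : ℤ) := by push_cast; ring
  rw [hidx]
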